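/- Under the same hypotheses (ζ 1-Lipschitz, ‖W_x‖ = ρ < 1), the system x(k+1) = ζ(W_x x(k) + W_u u(k) + W_y y(k)) is incrementally input-to-state stable: for two trajectories x_a, x_b driven by inputs (u_a, y_a) and (u_b, y_b) respectively, ‖x_a(k) - x_b(k)‖ ≤ ρ^k ‖x_a(0) - x_b(0)‖ + (1/(1-ρ)) · ( ‖W_u‖ · sup_{j<k} ‖u_a(j) - u_b(j)‖ + ‖W_y‖ · sup_{j<k} ‖y_a(j) - y_b(j)‖ ). -/

import Mathlib

/-- δISS of the ESN state equation: trajectories driven by different inputs satisfy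
an incremental input-to-state stability bound with contraction factor `ρ = ‖W_x‖`. -/
theorem esn_deltaISS
    {n nu ny : ℕ}
    (ζ : EuclideanSpace ℝ (Fin n) → EuclideanSpace ℝ (Fin n))
    (hζ : LipschitzWith 1 ζ)
    (Wx : EuclideanSpace ℝ (Fin n) →L[ℝ] EuclideanSpace ℝ (Fin n))
    (Wu : EuclideanSpace ℝ (Fin nu) →L[ℝ] EuclideanSpace ℝ (Fin n))
    (Wy : EuclideanSpace ℝ (Fin ny) →L[ℝ] EuclideanSpace ℝ (Fin n))
    (ρ : ℝ) (hρ : ρ = ‖Wx‖) (hρ1 : ρ < 1)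
    (ua ub : ℕ → EuclideanSpace ℝ (Fin nu)) (ya yb : ℕ → EuclideanSpace ℝ (Fin ny))
    (hu : BddAbove (Set.range fun j => ‖ua j - ub j‖))
    (hy : BddAbove (Set.range fun j => ‖ya j - yb j‖))
    (xa xb : ℕ → EuclideanSpace ℝ (Fin n))
    (ha : ∀ k, xa (k + 1) = ζ (Wx (xa k) + Wu (ua k) + Wy (ya k)))
    (hb : ∀ k, xb (k + 1) = ζ (Wx (xb k) + Wu (ub k) + Wy (yb k))) :
    ∀ k, ‖xa k - xb k‖ ≤ ρ ^ k * ‖xa 0 - xb 0‖ +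
      (1 / (1 - ρ)) *
        (‖Wu‖ * (⨆ j : Fin k, ‖ua j - ub j‖) +
         ‖Wy‖ * (⨆ j : Fin k, ‖ya j - yb j‖)) := by
  have hρ0 : 0 ≤ ρ := hρ ▸ norm_nonneg _
  have h1ρ : 0 < 1 - ρ := by linarith
  set c : ℝ := 1 / (1 - ρ) with hcdef
  have hc0 : 0 ≤ c := by positivity
  have hc : ρ * c + 1 = c := by rw [hcdef]; field_simp; ring
  have hbu : ∀ k, BddAbove (Set.range fun j : Fin k => ‖ua j - ub j‖) :=
    fun k => (Set.finite_range _).bddAbove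
  have hby : ∀ k, BddAbove (Set.range fun j : Fin k => ‖ya j - yb j‖) :=
    fun k => (Set.finite_range _).bddAbove
  set Su : ℕ → ℝ := fun k => ⨆ j : Fin k, ‖ua j - ub j‖ with hSudef
  set Sy : ℕ → ℝ := fun k => ⨆ j : Fin k, ‖ya j - yb j‖ with hSydef
  have hSu0 : ∀ k, 0 ≤ Su k := by
    intro k
    rcases Nat.eq_zero_or_pos k with rfl | hk
    · simp [hSudef, Real.iSup_of_isEmpty]
    · exact le_trans (norm_nonneg _) (le_ciSup (hbu k) ⟨0, hk⟩)
  have hSy0 : ∀ k, 0 ≤ Sy k := by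
    intro k
    rcases Nat.eq_zero_or_pos k with rfl | hk
    · simp [hSydef, Real.iSup_of_isEmpty]
    · exact le_trans (norm_nonneg _) (le_ciSup (hby k) ⟨0, hk⟩)
  have hSumono : ∀ k, Su k ≤ Su (k + 1) := by
    intro k
    rcases Nat.eq_zero_or_pos k with rfl | hk
    · simpa [hSudef, Real.iSup_of_isEmpty] using hSu0 1
    · have : Nonempty (Fin k) := ⟨⟨0, hk⟩⟩
      exact ciSup_le fun j => le_ciSup (hbu (k + 1)) ⟨j, j.2.trans (Nat.lt_succ_self _)⟩
  have hSymono : ∀ k, Sy k ≤ Sy (k + 1) := by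
    intro k
    rcases Nat.eq_zero_or_pos k with rfl | hk
    · simpa [hSydef, Real.iSup_of_isEmpty] using hSy0 1
    · have : Nonempty (Fin k) := ⟨⟨0, hk⟩⟩
      exact ciSup_le fun j => le_ciSup (hby (k + 1)) ⟨j, j.2.trans (Nat.lt_succ_self _)⟩
  have hmemu : ∀ k, ‖ua k - ub k‖ ≤ Su (k + 1) :=
    fun k => le_ciSup (hbu (k + 1)) ⟨k, Nat.lt_succ_self _⟩
  have hmemy : ∀ k, ‖ya k - yb k‖ ≤ Sy (k + 1) :=
    fun k => le_ciSup (hby (k + 1)) ⟨k, Nat.lt_succ_self _⟩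
  intro k
  induction k with
  | zero => simp [hSudef, hSydef, Real.iSup_of_isEmpty]
  | succ k ih =>
    have key : ‖xa (k + 1) - xb (k + 1)‖ ≤
        ρ * ‖xa k - xb k‖ + ‖Wu‖ * ‖ua k - ub k‖ + ‖Wy‖ * ‖ya k - yb k‖ := by
      rw [ha, hb]
      have h1 : ‖ζ (Wx (xa k) + Wu (ua k) + Wy (ya k)) - ζ (Wx (xb k) + Wu (ub k) + Wy (yb k))‖
          ≤ ‖(Wx (xa k) + Wu (ua k) + Wy (ya k)) - (Wx (xb k) + Wu (ub k) + Wy (yb k))‖ := by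
        simpa [dist_eq_norm] using hζ.dist_le_mul (Wx (xa k) + Wu (ua k) + Wy (ya k))
          (Wx (xb k) + Wu (ub k) + Wy (yb k))
      refine h1.trans ?_
      have h2 : (Wx (xa k) + Wu (ua k) + Wy (ya k)) - (Wx (xb k) + Wu (ub k) + Wy (yb k))
          = Wx (xa k - xb k) + Wu (ua k - ub k) + Wy (ya k - yb k) := by
        simp [map_sub]; abel
      rw [h2]
      calc ‖Wx (xa k - xb k) + Wu (ua k - ub k) + Wy (ya k - yb k)‖
          ≤ ‖Wx (xa k - xb k)‖ + ‖Wu (ua k - ub k)‖ + ‖Wy (ya k - yb k)‖ :=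
            norm_add₃_le
        _ ≤ ρ * ‖xa k - xb k‖ + ‖Wu‖ * ‖ua k - ub k‖ + ‖Wy‖ * ‖ya k - yb k‖ := by
            gcongr
            · rw [hρ]; exact Wx.le_opNorm _
            · exact Wu.le_opNorm _
            · exact Wy.le_opNorm _
    calc ‖xa (k + 1) - xb (k + 1)‖
        ≤ ρ * ‖xa k - xb k‖ + ‖Wu‖ * ‖ua k - ub k‖ + ‖Wy‖ * ‖ya k - yb k‖ := key
      _ ≤ ρ * (ρ ^ k * ‖xa 0 - xb 0‖ + c * (‖Wu‖ * Su k + ‖Wy‖ * Sy k)) +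
          ‖Wu‖ * Su (k + 1) + ‖Wy‖ * Sy (k + 1) := by
            gcongr
            · exact hmemu k
            · exact hmemy k
      _ ≤ ρ * (ρ ^ k * ‖xa 0 - xb 0‖ + c * (‖Wu‖ * Su (k + 1) + ‖Wy‖ * Sy (k + 1))) +
          ‖Wu‖ * Su (k + 1) + ‖Wy‖ * Sy (k + 1) := by
            gcongr
            · exact hSumono k
            · exact hSymono k
      _ = ρ ^ (k + 1) * ‖xa 0 - xb 0‖ +
          c * (‖Wu‖ * Su (k + 1) + ‖Wy‖ * Sy (k + 1)) := by
            linear_combination (‖Wu‖ * Su (k + 1) + ‖Wy‖ * Sy (k + 1)) * hc
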